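/- Let n ∈ ℕ, p ∈ (1, ∞), let (a_{jk}) be an n×n complex Hermitian matrix, and let d_1, …, d_n ≥ 0 satisfy Σ_k |a_{kj}| ≤ d_j for each j. Then for all c_1, …, c_n ∈ ℂ, the quantity Σ_j d_j·c_j·conj(F_p(c_j)) − Σ_{j,k} c_j·conj(F_p(c_k))·a_{kj} lies in the sector Σ_p. -/

import Mathlib

open Complex

noncomputable def Fp (p : ℝ) (z : ℂ) : ℂ :=
  if z = 0 then 0 else z * ((‖z‖ ^ (p - 2) : ℝ) : ℂ)

def Sector (φ : ℝ) : Set ℂ := {z : ℂ | z = 0 ∨ |z.arg| ≤ φ}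

lemma sinh_comp (a b : ℝ) (hb : 0 ≤ b) (hba : b ≤ a) {x : ℝ} (hx : 0 ≤ x) :
    a * Real.sinh (b*x) ≤ b * Real.sinh (a*x) := by
  have key : MonotoneOn (fun t => b * Real.sinh (a*t) - a * Real.sinh (b*t)) (Set.Ici 0) := by
    have hd : ∀ t : ℝ, HasDerivAt (fun t => b * Real.sinh (a*t) - a * Real.sinh (b*t))
        (b * (Real.cosh (a*t) * a) - a * (Real.cosh (b*t) * b)) t := by
      intro t
      have h := (((hasDerivAt_id t).const_mul a).sinh.const_mul b).sub
        (((hasDerivAt_id t).const_mul b).sinh.const_mul a)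
      simp at h
      exact h
    apply monotoneOn_of_deriv_nonneg (convex_Ici 0)
    · exact (Continuous.sub (continuous_const.mul (Real.continuous_sinh.comp (continuous_const.mul continuous_id)))
        (continuous_const.mul (Real.continuous_sinh.comp (continuous_const.mul continuous_id)))).continuousOn
    · intro t _
      exact ((hd t).differentiableAt).differentiableWithinAt
    · intro t ht
      rw [(hd t).deriv]
      have ht' : 0 ≤ t := le_of_lt (by simpa using ht)
      have : Real.cosh (b*t) ≤ Real.cosh (a*t) := by
        rw [Real.cosh_le_cosh]
        rw [_root_.abs_of_nonneg (mul_nonneg hb ht'), _root_.abs_of_nonneg (mul_nonneg (hb.trans hba) ht')]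
        exact mul_le_mul_of_nonneg_right hba ht'
      nlinarith [mul_le_mul_of_nonneg_left this (mul_nonneg (hb.trans hba) hb)]
  have := key (Set.self_mem_Ici) (by exact hx : x ∈ Set.Ici 0) hx
  simp only [mul_zero, Real.sinh_zero] at this
  linarith

lemma cosh_bound (a b : ℝ) (hb : 0 ≤ b) (hba : b ≤ a) (x : ℝ) :
    a^2 * Real.cosh (b*x) - b^2 * Real.cosh (a*x) ≤ a^2 - b^2 := by
  wlog hx : 0 ≤ x generalizing x
  · have := this (-x) (by linarith)
    simpa [mul_neg, Real.cosh_neg] using this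
  have key : MonotoneOn (fun t => b^2 * Real.cosh (a*t) - a^2 * Real.cosh (b*t)) (Set.Ici 0) := by
    have hd : ∀ t : ℝ, HasDerivAt (fun t => b^2 * Real.cosh (a*t) - a^2 * Real.cosh (b*t))
        (b^2 * (Real.sinh (a*t) * a) - a^2 * (Real.sinh (b*t) * b)) t := by
      intro t
      have h := (((hasDerivAt_id t).const_mul a).cosh.const_mul (b^2)).sub
        (((hasDerivAt_id t).const_mul b).cosh.const_mul (a^2))
      simp at h
      exact h
    apply monotoneOn_of_deriv_nonneg (convex_Ici 0)
    · exact (Continuous.sub (continuous_const.mul (Real.continuous_cosh.comp (continuous_const.mul continuous_id)))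
        (continuous_const.mul (Real.continuous_cosh.comp (continuous_const.mul continuous_id)))).continuousOn
    · intro t _
      exact ((hd t).differentiableAt).differentiableWithinAt
    · intro t ht
      rw [(hd t).deriv]
      have ht' : 0 ≤ t := le_of_lt (by simpa using ht)
      have := sinh_comp a b hb hba ht'
      nlinarith [mul_le_mul_of_nonneg_left this (mul_nonneg (hb.trans hba) hb)]
  have := key (Set.self_mem_Ici) (by exact hx : x ∈ Set.Ici 0) hx
  simp only [mul_zero, Real.cosh_zero, mul_one] at this
  linarith

lemma exp_core (p : ℝ) (hp : 1 < p) (x : ℝ) :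
    4*(p-1)*Real.exp (2*x)*(Real.exp ((p-2)*x)-1)^2
      ≤ (p-2)^2*(Real.exp ((2*p-2)*x)-1)*(Real.exp (2*x)-1) := by
  have H : p^2 * Real.cosh ((p-2)*x) - (p-2)^2 * Real.cosh (p*x) ≤ p^2 - (p-2)^2 := by
    rcases le_or_gt 2 p with h2 | h2
    · exact cosh_bound p (p-2) (by linarith) (by linarith) x
    · have := cosh_bound p (2-p) (by linarith) (by linarith) x
      have e1 : (2-p)*x = -((p-2)*x) := by ring
      rw [e1, Real.cosh_neg] at this
      have e2 : (2-p)^2 = (p-2)^2 := by ring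
      linarith [this, e2 ▸ this]
  set u := Real.exp x with hu
  set v := Real.exp ((p-2)*x) with hv
  have hupos : 0 < u := Real.exp_pos x
  have hvpos : 0 < v := Real.exp_pos _
  have h2x : Real.exp (2*x) = u^2 := by rw [hu, ← Real.exp_nat_mul]; norm_num [mul_comm]
  have hpx : Real.exp (p*x) = v*u^2 := by
    rw [hv, h2x.symm, ← Real.exp_add]; ring_nf
  have h2px : Real.exp ((2*p-2)*x) = v^2*u^2 := by
    have : (2*p-2)*x = (p-2)*x + p*x := by ring
    rw [this, Real.exp_add, hpx, hv]; ring
  have hcq : Real.cosh ((p-2)*x) = (v + v⁻¹)/2 := by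
    rw [Real.cosh_eq, hv, Real.exp_neg]
  have hcp : Real.cosh (p*x) = (v*u^2 + (v*u^2)⁻¹)/2 := by
    rw [Real.cosh_eq, hpx, Real.exp_neg, hpx]
  rw [hcq, hcp] at H
  rw [h2x, h2px]
  have hvu : (0:ℝ) < v*u^2 := by positivity
  have H2 := mul_le_mul_of_nonneg_right H (le_of_lt hvu)
  have e3 : (v*u^2)⁻¹ * (v*u^2) = 1 := inv_mul_cancel₀ (ne_of_gt hvu)
  have e4 : v⁻¹ * (v*u^2) = u^2 := by field_simp
  nlinarith [H2, e3, e4]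

lemma rpow_core (p : ℝ) (hp : 1 < p) {A B : ℝ} (hA : 0 < A) (hB : 0 < B) :
    4*(p-1)*(A^(p-1)*B - A*B^(p-1))^2
      ≤ (p-2)^2*((A^p+B^p)^2 - (A*B^(p-1)+A^(p-1)*B)^2) := by
  set t := A/B with htdef
  have ht : 0 < t := div_pos hA hB
  set w := t^(p-2) with hwdef
  have hw : 0 < w := Real.rpow_pos_of_pos ht _
  set P := B^p with hPdef
  have hP : 0 < P := Real.rpow_pos_of_pos hB _
  -- core inequality in t, w
  have core : 4*(p-1)*t^2*(w-1)^2 ≤ (p-2)^2*(t^2*w^2-1)*(t^2-1) := by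
    have h := exp_core p hp (Real.log t)
    have e0 : ∀ r : ℝ, Real.exp (r * Real.log t) = t^r := by
      intro r; rw [Real.rpow_def_of_pos ht, mul_comm]
    rw [e0, e0, e0] at h
    have e1 : t^(2:ℝ) = t^2 := by
      rw [← Real.rpow_natCast t 2]; norm_num
    have e2 : t^(2*p-2:ℝ) = t^2*w^2 := by
      have : (2*p-2:ℝ) = (p-2) + (p-2) + 2 := by ring
      rw [this, Real.rpow_add ht, Real.rpow_add ht, e1, hwdef]; ring
    rw [e1, e2] at h
    linarith
  -- rewrite the goal
  have hAB : A = t*B := by rw [htdef, div_mul_cancel₀ A (ne_of_gt hB)]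
  have hBp1 : B^(p-1)*B = P := by
    rw [hPdef, ← Real.rpow_add_one (ne_of_gt hB)]; ring_nf
  have htp1 : t^(p-1) = t*w := by
    have : (p-1:ℝ) = 1 + (p-2) := by ring
    rw [this, Real.rpow_add ht, Real.rpow_one, hwdef]
  have htp : t^p = t*(t*w) := by
    have : (p:ℝ) = 1 + (p-1) := by ring
    rw [this, Real.rpow_add ht, Real.rpow_one, htp1]
  have eA1 : A^(p-1) = t*w*B^(p-1) := by
    rw [hAB, Real.mul_rpow ht.le hB.le, htp1]
  have eAp : A^p = t*(t*w)*P := by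
    rw [hAB, Real.mul_rpow ht.le hB.le, htp, hPdef]
  have eABp : A*B^(p-1) = t*P := by
    rw [hAB, mul_assoc, mul_comm B, hBp1]
  have eApB : A^(p-1)*B = t*w*P := by
    rw [eA1, mul_assoc, hBp1]
  
  rw [eAp, eABp, eApB]
  nlinarith [mul_le_mul_of_nonneg_left core (le_of_lt (mul_pos hP hP)), sq_nonneg P]

lemma quadQ (cc S P Q M r : ℝ) (hcc : 0 ≤ cc) (key : M^2*Q^2 ≤ cc*(S^2 - M^2*P^2)) :
    (M^2 - r^2)*Q^2 ≤ cc*(S - r*P)^2 := by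
  rcases lt_or_ge 0 (cc*P^2 + Q^2) with hD | hD
  · have k2 : 0 ≤ Q^2*(cc*(S^2 - M^2*P^2) - M^2*Q^2) :=
      mul_nonneg (sq_nonneg Q) (by linarith)
    nlinarith [sq_nonneg ((cc*P^2+Q^2)*r - cc*S*P), k2, hD]
  · have h1 : Q^2 = 0 := by nlinarith [sq_nonneg Q, sq_nonneg P, mul_nonneg hcc (sq_nonneg P)]
    rw [h1] at *
    nlinarith [mul_nonneg hcc (sq_nonneg (S - r*P))]

set_option maxHeartbeats 1600000 in
lemma real_pair (p cst aA A B r i : ℝ) (hp : 1 < p) (hcst : 0 ≤ cst)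
    (hc2 : cst^2*(4*(p-1)) = (p-2)^2) (haa : 0 ≤ aA) (hA : 0 < A) (hB : 0 < B)
    (hri : r^2 + i^2 = (aA*A*B)^2) (hrM : r ≤ aA*A*B) :
    0 ≤ aA*(A^p+B^p) - r*(A^(p-2)+B^(p-2)) ∧
      |i*(A^(p-2)-B^(p-2))| ≤ cst*(aA*(A^p+B^p) - r*(A^(p-2)+B^(p-2))) := by
  have hcore := rpow_core p hp hA hB
  have mono : 0 ≤ (A^(p-1) - B^(p-1))*(A - B) := by
    rcases le_total A B with h | h
    · have h1 : A^(p-1) ≤ B^(p-1) := Real.rpow_le_rpow hA.le h (by linarith)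
      nlinarith
    · have h1 : B^(p-1) ≤ A^(p-1) := Real.rpow_le_rpow hB.le h (by linarith)
      nlinarith
  have hAa : A^(p-2)*A = A^(p-1) := by
    rw [← Real.rpow_add_one (ne_of_gt hA)]; ring_nf
  have hBb : B^(p-2)*B = B^(p-1) := by
    rw [← Real.rpow_add_one (ne_of_gt hB)]; ring_nf
  have hAp : A^(p-1)*A = A^p := by
    rw [← Real.rpow_add_one (ne_of_gt hA)]; ring_nf
  have hBp : B^(p-1)*B = B^p := by
    rw [← Real.rpow_add_one (ne_of_gt hB)]; ring_nf
  have hαpos : (0:ℝ) < A^(p-2) := Real.rpow_pos_of_pos hA _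
  have hβpos : (0:ℝ) < B^(p-2) := Real.rpow_pos_of_pos hB _
  set α := A^(p-2) with hα
  set β := B^(p-2) with hβ
  set A1 := A^(p-1) with hA1
  set B1 := B^(p-1) with hB1
  set Ap := A^p with hApd
  set Bp := B^p with hBpd
  clear_value α β A1 B1 Ap Bp
  clear hα hβ hA1 hB1 hApd hBpd
  set M := aA*A*B with hM
  set S := aA*(Ap+Bp) with hS
  -- S - M*(α+β) ≥ 0
  have hMP : M*(α+β) = aA*(A1*B + A*B1) := by linear_combination (aA*B)*hAa + (aA*A)*hBb
  have hSMP : 0 ≤ S - M*(α+β) := by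
    rw [hMP, hS]
    have h2 : Ap + Bp - (A1*B + A*B1) = (A1 - B1)*(A - B) := by linear_combination -hAp - hBp
    nlinarith [mul_nonneg haa mono]
  have hre0 : 0 ≤ S - r*(α+β) := by
    nlinarith [mul_nonneg (sub_nonneg.2 hrM) (by positivity : (0:ℝ) ≤ α+β)]
  refine ⟨hre0, ?_⟩
  have h4p : (0:ℝ) < 4*(p-1) := by linarith
  have key0 : (A1*B - A*B1)^2 ≤ cst^2*((Ap+Bp)^2 - (A*B1+A1*B)^2) := by
    rw [← hc2] at hcore
    have h' : 4*(p-1)*((A1*B - A*B1)^2) ≤ 4*(p-1)*(cst^2*((Ap+Bp)^2 - (A*B1+A1*B)^2)) := by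
      nlinarith [hcore]
    exact (mul_le_mul_iff_right₀ h4p).mp h'
  have key : M^2*(α-β)^2 ≤ cst^2*(S^2 - M^2*(α+β)^2) := by
    have e1 : M*(α-β) = aA*(A1*B - A*B1) := by linear_combination (aA*B)*hAa - (aA*A)*hBb
    have e3 : M^2*(α-β)^2 = aA^2 * (A1*B - A*B1)^2 := by linear_combination (M*(α-β) + aA*(A1*B - A*B1))*e1
    have e4 : M^2*(α+β)^2 = aA^2 * (A*B1+A1*B)^2 := by linear_combination (M*(α+β) + aA*(A*B1+A1*B))*hMP
    have e5 : S^2 = aA^2 * (Ap+Bp)^2 := by rw [hS]; ring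
    rw [e3, e4, e5]
    nlinarith [mul_le_mul_of_nonneg_left key0 (sq_nonneg aA)]
  have hq := quadQ (cst^2) S (α+β) (α-β) M r (sq_nonneg cst) key
  have hsq : (i*(α-β))^2 ≤ (cst*(S - r*(α+β)))^2 := by nlinarith [hq]
  have h6 := Real.sqrt_le_sqrt hsq
  rwa [Real.sqrt_sq_eq_abs, Real.sqrt_sq (mul_nonneg hcst hre0)] at h6

lemma pair_est (p : ℝ) (hp : 1 < p) (cst : ℝ) (hcst : 0 ≤ cst)
    (hc2 : cst^2 * (4*(p-1)) = (p-2)^2) (aa z w : ℂ) :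
    0 ≤ (((‖aa‖ * ((‖z‖)^p + (‖w‖)^p) : ℝ) : ℂ)
        - z * (starRingEnd ℂ) (Fp p w) * aa - w * (starRingEnd ℂ) (Fp p z) * (starRingEnd ℂ) aa).re ∧
      |(((‖aa‖ * ((‖z‖)^p + (‖w‖)^p) : ℝ) : ℂ)
        - z * (starRingEnd ℂ) (Fp p w) * aa - w * (starRingEnd ℂ) (Fp p z) * (starRingEnd ℂ) aa).im|
        ≤ cst * (((‖aa‖ * ((‖z‖)^p + (‖w‖)^p) : ℝ) : ℂ)
        - z * (starRingEnd ℂ) (Fp p w) * aa - w * (starRingEnd ℂ) (Fp p z) * (starRingEnd ℂ) aa).re := by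
  have hp0 : p ≠ 0 := by linarith
  by_cases hz : z = 0
  · subst hz
    simp [Fp, Real.zero_rpow hp0]
    constructor
    · positivity
    · positivity
  by_cases hw : w = 0
  · subst hw
    simp [Fp, Real.zero_rpow hp0]
    constructor
    · positivity
    · positivity
  have hA : 0 < ‖z‖ := norm_pos_iff.mpr hz
  have hB : 0 < ‖w‖ := norm_pos_iff.mpr hw
  set μ := aa * z * (starRingEnd ℂ) w with hμdef
  have hTc : (((‖aa‖ * ((‖z‖)^p + (‖w‖)^p) : ℝ) : ℂ)
        - z * (starRingEnd ℂ) (Fp p w) * aa - w * (starRingEnd ℂ) (Fp p z) * (starRingEnd ℂ) aa)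
      = (((‖aa‖ * ((‖z‖)^p + (‖w‖)^p) : ℝ) : ℂ))
        - μ * (((‖w‖)^(p-2) : ℝ) : ℂ)
        - (starRingEnd ℂ) μ * (((‖z‖)^(p-2) : ℝ) : ℂ) := by
    simp only [Fp, if_neg hz, if_neg hw, hμdef, map_mul, Complex.conj_conj, Complex.conj_ofReal]
    ring
  rw [hTc]
  have hre : ((((‖aa‖ * ((‖z‖)^p + (‖w‖)^p) : ℝ) : ℂ))
        - μ * (((‖w‖)^(p-2) : ℝ) : ℂ)
        - (starRingEnd ℂ) μ * (((‖z‖)^(p-2) : ℝ) : ℂ)).re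
      = ‖aa‖ * ((‖z‖)^p + (‖w‖)^p)
        - μ.re*((‖z‖)^(p-2)+(‖w‖)^(p-2)) := by
    simp [Complex.sub_re, Complex.mul_re, Complex.conj_re, Complex.conj_im]
    ring
  have him : ((((‖aa‖ * ((‖z‖)^p + (‖w‖)^p) : ℝ) : ℂ))
        - μ * (((‖w‖)^(p-2) : ℝ) : ℂ)
        - (starRingEnd ℂ) μ * (((‖z‖)^(p-2) : ℝ) : ℂ)).im
      = μ.im*((‖z‖)^(p-2)-(‖w‖)^(p-2)) := by
    simp [Complex.sub_im, Complex.mul_im, Complex.conj_re, Complex.conj_im]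
    ring
  rw [hre, him]
  have hMμ : ‖μ‖ = ‖aa‖ * ‖z‖ * ‖w‖ := by
    simp [hμdef, map_mul, Complex.norm_conj]
  have hri : μ.re^2 + μ.im^2 = (‖aa‖ * ‖z‖ * ‖w‖)^2 := by
    rw [← hMμ, Complex.sq_norm, Complex.normSq_apply]; ring
  have hrM : μ.re ≤ ‖aa‖ * ‖z‖ * ‖w‖ := hMμ ▸ Complex.re_le_norm μ
  exact real_pair p cst (‖aa‖) (‖z‖) (‖w‖) μ.re μ.im hp hcst hc2
    (norm_nonneg aa) hA hB hri hrM

lemma mem_sector (s : ℝ) (z : ℂ) (hre : 0 ≤ z.re)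
    (him : |z.im| ≤ s * ‖z‖) : z ∈ Sector (Real.arcsin s) := by
  by_cases hz : z = 0
  · exact Or.inl hz
  · right
    have habs : 0 < ‖z‖ := norm_pos_iff.mpr hz
    rw [Complex.arg_of_re_nonneg hre]
    have ht : |z.im / ‖z‖| ≤ s := by
      rw [abs_div, abs_of_pos habs, div_le_iff₀ habs]
      exact him
    have heq : |Real.arcsin (z.im / ‖z‖)| = Real.arcsin |z.im / ‖z‖| := by
      rcases le_or_gt 0 (z.im / ‖z‖) with h | h
      · rw [_root_.abs_of_nonneg h, _root_.abs_of_nonneg (Real.arcsin_nonneg.2 h)]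
      · rw [_root_.abs_of_neg h, Real.arcsin_neg, _root_.abs_of_neg (Real.arcsin_lt_zero.2 h)]
    rw [heq]
    exact Real.monotone_arcsin ht

lemma diag_eq (p : ℝ) (hp : 1 < p) (z : ℂ) :
    z * (starRingEnd ℂ) (Fp p z) = ((‖z‖ ^ p : ℝ) : ℂ) := by
  have hp0 : p ≠ 0 := by linarith
  by_cases hz : z = 0
  · subst hz; simp [Fp, Real.zero_rpow hp0]
  · have hA : 0 < ‖z‖ := norm_pos_iff.mpr hz
    rw [Fp, if_neg hz, map_mul, Complex.conj_ofReal, ← mul_assoc, Complex.mul_conj]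
    rw [Complex.normSq_eq_norm_sq, ← Complex.ofReal_mul]
    congr 1
    rw [pow_two, mul_assoc, mul_comm (‖z‖) (‖z‖ ^ (p-2)),
      ← Real.rpow_add_one (ne_of_gt hA) (p-2)]
    rw [mul_comm, ← Real.rpow_add_one (ne_of_gt hA)]
    ring_nf

set_option maxHeartbeats 1000000 in
theorem form_in_sector (n : ℕ) (p : ℝ) (hp : 1 < p)
    (a : Fin n → Fin n → ℂ) (d : Fin n → ℝ) (c : Fin n → ℂ)
    (hherm : ∀ j k, a j k = (starRingEnd ℂ) (a k j))
    (hd : ∀ j, 0 ≤ d j)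
    (hdom : ∀ j, ∑ k, ‖(a k j)‖ ≤ d j) :
    (∑ j, ((d j : ℝ) : ℂ) * c j * (starRingEnd ℂ) (Fp p (c j)))
      - (∑ j, ∑ k, c j * (starRingEnd ℂ) (Fp p (c k)) * a k j) ∈
      Sector (Real.arcsin |1 - 2 / p|) := by
  have hp0 : p ≠ 0 := by linarith
  have hppos : (0:ℝ) < p := by linarith
  have h4p : (0:ℝ) < 4*(p-1) := by linarith
  set cst : ℝ := Real.sqrt ((p-2)^2/(4*(p-1))) with hcstdef
  have hcc : (0:ℝ) ≤ (p-2)^2/(4*(p-1)) := by positivity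
  have hcst : 0 ≤ cst := Real.sqrt_nonneg _
  have hc2 : cst^2*(4*(p-1)) = (p-2)^2 := by
    rw [hcstdef, Real.sq_sqrt hcc, div_mul_cancel₀ _ (ne_of_gt h4p)]
  -- abbreviations (plain defs, no set)
  let X : Fin n → ℝ := fun j => (‖(c j)‖)^p
  let W : Fin n → Fin n → ℂ := fun j k => c j * (starRingEnd ℂ) (Fp p (c k)) * a k j
  let T : Fin n → Fin n → ℂ := fun j k =>
    ((‖(a k j)‖ * (X j + X k) : ℝ) : ℂ) - W j k
      - c k * (starRingEnd ℂ) (Fp p (c j)) * (starRingEnd ℂ) (a k j)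
  let σ : Fin n → ℝ := fun j => ∑ k, ‖(a k j)‖
  set Z : ℂ := (∑ j, ((d j : ℝ) : ℂ) * c j * (starRingEnd ℂ) (Fp p (c j)))
      - (∑ j, ∑ k, c j * (starRingEnd ℂ) (Fp p (c k)) * a k j) with hZdef
  have hX0 : ∀ j, 0 ≤ X j := fun j => Real.rpow_nonneg (norm_nonneg _) _
  have hpair : ∀ j k, 0 ≤ (T j k).re ∧ |(T j k).im| ≤ cst * (T j k).re := fun j k =>
    pair_est p hp cst hcst hc2 (a k j) (c j) (c k)
  have habs_symm : ∀ j k, ‖(a j k)‖ = ‖(a k j)‖ := fun j k => by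
    rw [hherm j k]; exact Complex.norm_conj _
  have hTW : ∀ j k, T j k = ((‖(a k j)‖ * (X j + X k) : ℝ) : ℂ) - W j k - W k j := by
    intro j k
    show _ = _ - _ - (c k * (starRingEnd ℂ) (Fp p (c j)) * a j k)
    rw [hherm j k]
  have hZ1 : Z = (∑ j, ((d j * X j : ℝ) : ℂ)) - ∑ j, ∑ k, W j k := by
    rw [hZdef]
    congr 1
    refine Finset.sum_congr rfl fun j _ => ?_
    rw [mul_assoc, diag_eq p hp]
    push_cast
    ring
  have hS1 : ∑ j, ∑ k, ‖(a k j)‖*(X j + X k) = 2*∑ j, σ j * X j := by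
    have e1 : ∀ j, ∑ k, ‖(a k j)‖*(X j + X k)
        = (∑ k, ‖(a k j)‖*X j) + ∑ k, ‖(a k j)‖*X k := fun j => by
      rw [← Finset.sum_add_distrib]
      exact Finset.sum_congr rfl fun k _ => by ring
    rw [Finset.sum_congr rfl fun j _ => e1 j, Finset.sum_add_distrib]
    have e2 : ∑ j, ∑ k, ‖(a k j)‖*X k = ∑ j, ∑ k, ‖(a k j)‖*X j := by
      rw [Finset.sum_comm]
      exact Finset.sum_congr rfl fun j _ => Finset.sum_congr rfl fun k _ => by rw [habs_symm]
    have e3 : ∀ j, ∑ k, ‖(a k j)‖*X j = σ j * X j := fun j => by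
      rw [← Finset.sum_mul]
    rw [e2, Finset.sum_congr rfl fun j _ => e3 j]
    ring
  have hsum : (∑ j, ∑ k, T j k)
      = ((2*∑ j, σ j * X j : ℝ) : ℂ) - 2 * ∑ j, ∑ k, W j k := by
    rw [Finset.sum_congr rfl fun j _ => Finset.sum_congr rfl fun k _ => hTW j k]
    simp only [Finset.sum_sub_distrib]
    have hS2 : ∑ j, ∑ k, W k j = ∑ j, ∑ k, W j k := Finset.sum_comm
    rw [hS2, ← hS1]
    push_cast
    ring
  have hsplit : Z = ((∑ j, (d j - σ j) * X j : ℝ) : ℂ)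
      + (((1:ℝ)/2 : ℝ) : ℂ) * ∑ j, ∑ k, T j k := by
    rw [hZ1, hsum]
    push_cast
    have hdd : (∑ x, ((d x:ℂ) - (σ x:ℂ)) * ((X x:ℝ):ℂ))
        = (∑ x, (d x:ℂ)*((X x:ℝ):ℂ)) - ∑ x, (σ x:ℂ)*((X x:ℝ):ℂ) := by
      rw [← Finset.sum_sub_distrib]
      exact Finset.sum_congr rfl fun x _ => by ring
    rw [hdd]
    ring
  have hZre : Z.re = (∑ j, (d j - σ j) * X j) + (1/2)*(∑ j, ∑ k, (T j k).re) := by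
    rw [hsplit]
    simp [Complex.add_re, Complex.re_ofReal_mul, Complex.re_sum]
  have hZim : Z.im = (1/2)*(∑ j, ∑ k, (T j k).im) := by
    rw [hsplit]
    simp [Complex.add_im, Complex.im_ofReal_mul, Complex.im_sum]
  have hfirst : 0 ≤ ∑ j, (d j - σ j) * X j :=
    Finset.sum_nonneg fun j _ => mul_nonneg (by linarith [hdom j]) (hX0 j)
  have hTsum : 0 ≤ ∑ j, ∑ k, (T j k).re :=
    Finset.sum_nonneg fun j _ => Finset.sum_nonneg fun k _ => (hpair j k).1
  have hre0 : 0 ≤ Z.re := by rw [hZre]; positivity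
  have him : |Z.im| ≤ cst * Z.re := by
    rw [hZim, hZre]
    have h1 : |∑ j, ∑ k, (T j k).im| ≤ ∑ j, ∑ k, |(T j k).im| :=
      (Finset.abs_sum_le_sum_abs _ _).trans
        (Finset.sum_le_sum fun j _ => Finset.abs_sum_le_sum_abs _ _)
    have h2 : ∑ j, ∑ k, |(T j k).im| ≤ ∑ j, ∑ k, cst * (T j k).re :=
      Finset.sum_le_sum fun j _ => Finset.sum_le_sum fun k _ => (hpair j k).2
    have h3 : ∑ j, ∑ k, cst * (T j k).re = cst * ∑ j, ∑ k, (T j k).re := by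
      rw [Finset.mul_sum]
      exact Finset.sum_congr rfl fun j _ => (Finset.mul_sum _ _ _).symm
    rw [abs_mul, _root_.abs_of_nonneg (by norm_num : (0:ℝ) ≤ 1/2)]
    have h4 : |∑ j, ∑ k, (T j k).im| ≤ cst * ∑ j, ∑ k, (T j k).re := by
      calc |∑ j, ∑ k, (T j k).im| ≤ ∑ j, ∑ k, |(T j k).im| := h1
        _ ≤ ∑ j, ∑ k, cst * (T j k).re := h2
        _ = cst * ∑ j, ∑ k, (T j k).re := h3
    nlinarith [mul_nonneg hcst hfirst]
  -- convert to arcsin form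
  have hs2 : |1 - 2/p|^2 * p^2 = (p-2)^2 := by
    rw [_root_.sq_abs]; field_simp
  have hs0 : 0 ≤ |1 - 2/p| := abs_nonneg _
  have himsq : Z.im^2 ≤ cst^2 * Z.re^2 := by
    nlinarith [him, abs_nonneg Z.im, mul_nonneg hcst hre0, _root_.sq_abs Z.im]
  have habsZ : (‖Z‖)^2 = Z.re^2 + Z.im^2 := by
    rw [Complex.sq_norm, Complex.normSq_apply]; ring
  have hfin : |Z.im| ≤ |1 - 2/p| * ‖Z‖ := by
    have hkey : Z.im^2 ≤ (|1 - 2/p| * ‖Z‖)^2 := by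
      have e1 : (|1 - 2/p| * ‖Z‖)^2 * p^2 = (p-2)^2 * (Z.re^2 + Z.im^2) := by
        rw [mul_pow, habsZ]
        linear_combination (Z.re^2 + Z.im^2) * hs2
      have e2 : Z.im^2 * (4*(p-1)) ≤ (p-2)^2 * Z.re^2 := by
        have h6 := mul_le_mul_of_nonneg_right himsq (le_of_lt h4p)
        have h6' : cst^2 * Z.re^2 * (4*(p-1)) = (p-2)^2 * Z.re^2 := by
          linear_combination Z.re^2 * hc2
        linarith
      have h7 : Z.im^2*p^2 ≤ (|1 - 2/p| * ‖Z‖)^2*p^2 := by nlinarith [e1, e2]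
      exact (mul_le_mul_iff_left₀ (pow_pos hppos 2)).mp h7
    have h5 := Real.sqrt_le_sqrt hkey
    rwa [Real.sqrt_sq_eq_abs, Real.sqrt_sq (mul_nonneg hs0 (norm_nonneg Z))] at h5
  exact mem_sector _ Z hre0 hfin
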